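/- arXiv:1103.3680 — 7 statements merged into one kernel-verified Lean document; each statement's English description precedes it below -/
import Mathlib

section
/- Let (X,≤) be a partially ordered set and p a partial metric on X making (X,p) complete. Let f : X → X be monotone non-decreasing such that p(fx,fy) ≤ p(x,y) - ψ(p(x,y)) whenever y ≤ x, where ψ : [0,∞) → [0,∞) is continuous, non-decreasing, positive on (0,∞), ψ(0) = 0, and ψ(t) → ∞ as t → ∞. If there exists x_0 with x_0 ≤ f(x_0) and f is continuous in (X,p), then f has a fixed point u ∈ X with p(u,u) = 0. -/
noncomputable section
open Filter Topology

def IsPartialMetric {X : Type*} (p : X → X → ℝ) : Prop :=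
  (∀ x y, 0 ≤ p x y) ∧
  (∀ x y, x = y ↔ (p x x = p x y ∧ p x y = p y y)) ∧
  (∀ x y, p x x ≤ p x y) ∧
  (∀ x y, p x y = p y x) ∧
  (∀ x y z, p x y ≤ p x z + p z y - p z z)

/-- `u` converges to `x` in the partial metric space `(X, p)`. -/
def PConvergesTo {X : Type*} (p : X → X → ℝ) (u : ℕ → X) (x : X) : Prop :=
  Tendsto (fun n => p (u n) x) atTop (𝓝 (p x x))

/-- `u` converges properly to `x` in `(X, p)`. -/
def PProperConvergesTo {X : Type*} (p : X → X → ℝ) (u : ℕ → X) (x : X) : Prop :=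
  Tendsto (fun n => p (u n) x) atTop (𝓝 (p x x)) ∧
  Tendsto (fun n => p (u n) (u n)) atTop (𝓝 (p x x))

/-- `u` is a Cauchy sequence in `(X, p)`: `lim_{n,m} p (u n) (u m)` exists (finite). -/
def PCauchy {X : Type*} (p : X → X → ℝ) (u : ℕ → X) : Prop :=
  ∃ l : ℝ, Tendsto (fun nm : ℕ × ℕ => p (u nm.1) (u nm.2)) atTop (𝓝 l)

/-- `(X, p)` is a complete partial metric space. -/
def PComplete {X : Type*} (p : X → X → ℝ) : Prop :=
  ∀ u : ℕ → X, ∀ l : ℝ,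
    Tendsto (fun nm : ℕ × ℕ => p (u nm.1) (u nm.2)) atTop (𝓝 l) →
    ∃ x, p x x = l ∧ Tendsto (fun n => p (u n) x) atTop (𝓝 l)

/-- `f` is continuous on `(X, p)` (w.r.t. both `p` and the induced metric `pˢ`). -/
def PContinuousMap {X : Type*} (p : X → X → ℝ) (f : X → X) : Prop :=
  ∀ (u : ℕ → X) (x : X),
    (PConvergesTo p u x → PConvergesTo p (fun n => f (u n)) (f x)) ∧
    (PProperConvergesTo p u x → PProperConvergesTo p (fun n => f (u n)) (f x))

theorem fixed_point_continuous_case {X : Type*} [PartialOrder X] (p : X → X → ℝ)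
    (hp : IsPartialMetric p) (hcomp : PComplete p)
    (f : X → X) (hf : Monotone f)
    (ψ : ℝ → ℝ) (hψc : ContinuousOn ψ (Set.Ici 0)) (hψm : MonotoneOn ψ (Set.Ici 0))
    (hψpos : ∀ t : ℝ, 0 < t → 0 < ψ t) (hψ0 : ψ 0 = 0)
    (hψtop : Tendsto ψ atTop atTop)
    (hcontr : ∀ x y : X, y ≤ x → p (f x) (f y) ≤ p x y - ψ (p x y))
    (x₀ : X) (hx₀ : x₀ ≤ f x₀)
    (hfc : PContinuousMap p f) :
    ∃ u : X, f u = u ∧ p u u = 0 := by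

  obtain ⟨hnn, heq, hple, hsym, htri⟩ := hp
  have hψnn : ∀ t : ℝ, 0 ≤ t → 0 ≤ ψ t := fun t ht => by
    have := hψm (Set.self_mem_Ici) ht ht
    simpa [hψ0] using this
  set u : ℕ → X := fun n => f^[n] x₀ with hu
  have hu_succ : ∀ n, u (n + 1) = f (u n) := fun n => Function.iterate_succ_apply' f n x₀
  have humono : Monotone u := by
    apply monotone_nat_of_le_succ
    intro n
    induction n with
    | zero => exact hx₀
    | succ n ih => rw [hu_succ, hu_succ]; exact hf ih
  -- step inequality
  have hstep : ∀ n m, p (u (n+1)) (u (m+1)) ≤ p (u n) (u m) - ψ (p (u n) (u m)) := by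
    intro n m
    rcases le_total m n with h | h
    · rw [hu_succ, hu_succ]; exact hcontr _ _ (humono h)
    · rw [hu_succ, hu_succ, hsym (f (u n)), hsym (u n)]
      exact hcontr _ _ (humono h)
  -- boundedness
  set d₀ : ℝ := p (u 0) (u 1) with hd₀
  have hd₀nn : 0 ≤ d₀ := hnn _ _
  obtain ⟨M₀, hM₀⟩ : ∃ M₀, ∀ t ≥ M₀, d₀ ≤ ψ t := by
    have := hψtop.eventually_ge_atTop d₀
    rw [eventually_atTop] at this
    exact this
  set M : ℝ := max M₀ (p (u 0) (u 0)) with hM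
  have hbound0 : ∀ n, p (u 0) (u n) ≤ M + d₀ := by
    intro n
    induction n with
    | zero =>
      have : p (u 0) (u 0) ≤ M := le_max_right _ _
      linarith
    | succ n ih =>
      have h1 : p (u 0) (u (n+1)) ≤ d₀ + p (u 1) (u (n+1)) := by
        have t1 := htri (u 0) (u (n+1)) (u 1)
        have t2 := hnn (u 1) (u 1)
        linarith
      have h2 := hstep 0 n
      by_cases hc : p (u 0) (u n) ≤ M
      · have := hψnn _ (hnn (u 0) (u n))
        linarith
      · have : d₀ ≤ ψ (p (u 0) (u n)) := by
          apply hM₀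
          have : M₀ ≤ M := le_max_left _ _
          linarith [not_le.mp hc]
        linarith
  have hboundB : ∀ n m, p (u n) (u m) ≤ 2 * (M + d₀) := by
    intro n m
    have t1 := htri (u n) (u m) (u 0)
    have t2 := hnn (u 0) (u 0)
    have b1 : p (u n) (u 0) ≤ M + d₀ := by rw [hsym]; exact hbound0 n
    have b2 := hbound0 m
    linarith
  -- sup of tails
  set S : ℕ → Set ℝ := fun k => {r | ∃ n m, k ≤ n ∧ k ≤ m ∧ r = p (u n) (u m)} with hS
  have hSne : ∀ k, (S k).Nonempty := fun k => ⟨p (u k) (u k), k, k, le_rfl, le_rfl, rfl⟩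
  have hSbdd : ∀ k, BddAbove (S k) := by
    intro k
    refine ⟨2 * (M + d₀), ?_⟩
    rintro r ⟨n, m, _, _, rfl⟩
    exact hboundB n m
  set s : ℕ → ℝ := fun k => sSup (S k) with hs
  have hsnn : ∀ k, 0 ≤ s k := fun k =>
    le_trans (hnn (u k) (u k)) (le_csSup (hSbdd k) ⟨k, k, le_rfl, le_rfl, rfl⟩)
  have hsanti : Antitone s := by
    intro k l hkl
    apply csSup_le_csSup (hSbdd k) (hSne l)
    rintro r ⟨n, m, hn, hm, rfl⟩
    exact ⟨n, m, le_trans hkl hn, le_trans hkl hm, rfl⟩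
  have hsconv : Tendsto s atTop (𝓝 (⨅ k, s k)) := by
    apply tendsto_atTop_ciInf hsanti
    exact ⟨0, by rintro r ⟨k, rfl⟩; exact hsnn k⟩
  set L : ℝ := ⨅ k, s k with hL
  have hLnn : 0 ≤ L := le_ciInf hsnn
  have hL0 : L = 0 := by
    by_contra hne
    have hLpos : 0 < L := lt_of_le_of_ne hLnn (Ne.symm hne)
    have hψL : 0 < ψ (L / 2) := hψpos _ (by linarith)
    have hkey : ∀ k, s (k+1) ≤ max (L / 2) (s k - ψ (L / 2)) := by
      intro k
      apply csSup_le (hSne (k+1))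
      rintro r ⟨n, m, hn, hm, rfl⟩
      match n, hn with
      | n' + 1, hn =>
      match m, hm with
      | m' + 1, hm =>
      have hq : p (u n') (u m') ≤ s k :=
        le_csSup (hSbdd k) ⟨n', m', by omega, by omega, rfl⟩
      have hst := hstep n' m'
      by_cases hc : p (u n') (u m') ≤ L / 2
      · have := hψnn _ (hnn (u n') (u m'))
        exact le_trans (by linarith) (le_max_left _ _)
      · have hψq : ψ (L / 2) ≤ ψ (p (u n') (u m')) := by
          apply hψm (by simp; linarith) (by simp [hnn]) (by linarith)
        exact le_trans (by linarith) (le_max_right _ _)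
    obtain ⟨k, hk⟩ : ∃ k, s k < L + ψ (L / 2) := by
      apply exists_lt_of_ciInf_lt
      rw [← hL]; linarith
    have h1 : L ≤ s (k+1) := ciInf_le ⟨0, by rintro r ⟨j, rfl⟩; exact hsnn j⟩ (k+1)
    have h2 := hkey k
    have : max (L / 2) (s k - ψ (L / 2)) < L := max_lt (by linarith) (by linarith)
    linarith
  have hsconv0 : Tendsto s atTop (𝓝 0) := hL0 ▸ hsconv
  -- Cauchy
  have hC : Tendsto (fun nm : ℕ × ℕ => p (u nm.1) (u nm.2)) atTop (𝓝 0) := by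
    rw [NormedAddCommGroup.tendsto_nhds_zero]
    intro ε hε
    obtain ⟨k, hk⟩ : ∃ k, s k < ε := ((tendsto_order.mp hsconv0).2 ε hε).exists
    filter_upwards [eventually_ge_atTop (k, k)] with nm hnm
    have h1 : k ≤ nm.1 := hnm.1
    have h2 : k ≤ nm.2 := hnm.2
    have hle : p (u nm.1) (u nm.2) ≤ s k := le_csSup (hSbdd k) ⟨nm.1, nm.2, h1, h2, rfl⟩
    rw [Real.norm_eq_abs, abs_of_nonneg (hnn _ _)]
    exact lt_of_le_of_lt hle hk
  obtain ⟨x, hxx, hxc⟩ := hcomp u 0 hC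
  -- diagonal tendsto
  have hdiag : Tendsto (fun n : ℕ => p (u n) (u n)) atTop (𝓝 0) := by
    have hdd : Tendsto (fun n : ℕ => (n, n)) atTop (atTop : Filter (ℕ × ℕ)) := by
      rw [tendsto_atTop_atTop]
      intro b
      exact ⟨max b.1 b.2, fun a ha =>
        ⟨le_trans (le_max_left _ _) ha, le_trans (le_max_right _ _) ha⟩⟩
    exact hC.comp hdd
  have hprop : PProperConvergesTo p u x := by
    constructor
    · rw [hxx]; exact hxc
    · rw [hxx]; exact hdiag
  obtain ⟨hfc1, hfc2⟩ := (hfc u x).2 hprop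
  -- p (f x) (f x) = 0
  have hfsq : Tendsto (fun n => p (f (u n)) (f (u n))) atTop (𝓝 0) := by
    have e : (fun n => p (f (u n)) (f (u n))) = fun n => p (u (n+1)) (u (n+1)) := by
      funext n; rw [hu_succ]
    rw [e]
    have := hdiag.comp (tendsto_add_atTop_nat 1)
    exact this
  have hfxfx : p (f x) (f x) = 0 := tendsto_nhds_unique hfc2 hfsq
  rw [hfxfx] at hfc1
  -- p x (f x) = 0
  have hshift : Tendsto (fun n => p (u (n+1)) x) atTop (𝓝 0) := by
    have := hxc.comp (tendsto_add_atTop_nat 1)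
    exact this
  have hshift2 : Tendsto (fun n => p (u (n+1)) (f x)) atTop (𝓝 0) := by
    have : (fun n => p (u (n+1)) (f x)) = fun n => p (f (u n)) (f x) := by
      funext n; rw [hu_succ]
    rw [this]; exact hfc1
  have hxfx : p x (f x) = 0 := by
    have hsum : Tendsto (fun n => p x (u (n+1)) + p (u (n+1)) (f x)) atTop (𝓝 0) := by
      have h1 : Tendsto (fun n => p x (u (n+1))) atTop (𝓝 0) := by
        simpa [hsym] using hshift
      simpa using h1.add hshift2
    have hle' : ∀ n, p x (f x) ≤ p x (u (n+1)) + p (u (n+1)) (f x) := by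
      intro n
      have t1 := htri x (f x) (u (n+1))
      have t2 := hnn (u (n+1)) (u (n+1))
      linarith
    have := ge_of_tendsto' hsum hle'
    exact le_antisymm this (hnn _ _)
  refine ⟨x, ?_, hxx⟩
  apply (heq (f x) x).mpr
  constructor
  · rw [hfxfx, hsym, hxfx]
  · rw [hsym, hxfx, hxx]
end
end

section
/- Let (X,≤) be a partially ordered set and p a partial metric on X making (X,p) complete. Let f : X → X be monotone non-decreasing such that p(fx,fy) ≤ p(x,y) - ψ(p(x,y)) whenever y ≤ x, where ψ : [0,∞) → [0,∞) is continuous, non-decreasing, positive on (0,∞), with ψ(0) = 0 and ψ(t) → ∞ as t → ∞. Suppose that whenever a non-decreasing sequence {x_n} converges to x in (X,p), then x_n ≤ x for all n. If there exists x_0 with x_0 ≤ f(x_0), then f has a fixed point u with p(u,u) = 0. -/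
noncomputable section
open Filter Topology

theorem fixed_point_order_limit_case {X : Type*} [PartialOrder X] (p : X → X → ℝ)
    (hp : IsPartialMetric p) (hcomp : PComplete p)
    (f : X → X) (hf : Monotone f)
    (ψ : ℝ → ℝ) (hψc : ContinuousOn ψ (Set.Ici 0)) (hψm : MonotoneOn ψ (Set.Ici 0))
    (hψpos : ∀ t : ℝ, 0 < t → 0 < ψ t) (hψ0 : ψ 0 = 0)
    (hψtop : Tendsto ψ atTop atTop)
    (hcontr : ∀ x y : X, y ≤ x → p (f x) (f y) ≤ p x y - ψ (p x y))
    (hord : ∀ (u : ℕ → X) (x : X), Monotone u → PConvergesTo p u x → ∀ n, u n ≤ x)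
    (x₀ : X) (hx₀ : x₀ ≤ f x₀) :
    ∃ u : X, f u = u ∧ p u u = 0 := by
  obtain ⟨ppos, p2, pself, psymm, ptri⟩ := hp
  have hψnn : ∀ t : ℝ, 0 ≤ t → 0 ≤ ψ t := fun t ht => by
    simpa [hψ0] using hψm Set.self_mem_Ici ht ht
  set x : ℕ → X := fun n => f^[n] x₀ with hxdef
  have hxsucc : ∀ n, x (n + 1) = f (x n) := fun n => Function.iterate_succ_apply' f n x₀
  have hx0 : x 0 = x₀ := rfl
  have hmonoX : Monotone x := by
    apply monotone_nat_of_le_succ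
    intro n
    induction n with
    | zero => rw [hxsucc 0, hx0]; exact hx₀
    | succ k ih =>
      rw [hxsucc (k+1)]
      nth_rewrite 1 [hxsucc k]
      exact hf ih
  have hstep : ∀ m n, p (x (m + 1)) (x (n + 1)) ≤ p (x m) (x n) - ψ (p (x m) (x n)) := by
    intro m n
    rcases le_total m n with h | h
    · have := hcontr (x n) (x m) (hmonoX h)
      rw [hxsucc m, hxsucc n, psymm (f (x m)) (f (x n)), psymm (x m) (x n)]
      exact this
    · have := hcontr (x m) (x n) (hmonoX h)
      rw [hxsucc m, hxsucc n]
      exact this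
  -- boundedness
  set A : ℝ := p (x 1) (x 0) with hAdef
  have hA0 : 0 ≤ A := ppos _ _
  obtain ⟨M, hM⟩ := (hψtop.eventually_ge_atTop A).exists_forall_of_atTop
  set B : ℝ := max (p (x 0) (x 0)) (M + A) with hBdef
  have hbound0 : ∀ n, p (x n) (x 0) ≤ B := by
    intro n
    induction n with
    | zero => exact le_max_left _ _
    | succ k ih =>
      have h1 : p (x (k+1)) (x 0) ≤ p (x (k+1)) (x 1) + p (x 1) (x 0) - p (x 1) (x 1) :=
        ptri _ _ _
      have h2 : p (x (k+1)) (x 1) ≤ p (x k) (x 0) - ψ (p (x k) (x 0)) := hstep k 0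
      have h3 : 0 ≤ p (x 1) (x 1) := ppos _ _
      rcases le_total (p (x k) (x 0)) M with hc | hc
      · have hψn : 0 ≤ ψ (p (x k) (x 0)) := hψnn _ (ppos _ _)
        have : p (x (k+1)) (x 0) ≤ M + A := by linarith
        exact this.trans (le_max_right _ _)
      · have hψA : A ≤ ψ (p (x k) (x 0)) := hM _ hc
        linarith
  have hbound : ∀ n m, p (x n) (x m) ≤ 2 * B := by
    intro n m
    have h1 : p (x n) (x m) ≤ p (x n) (x 0) + p (x 0) (x m) - p (x 0) (x 0) := ptri _ _ _
    have h2 : p (x 0) (x m) = p (x m) (x 0) := psymm _ _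
    have h3 : 0 ≤ p (x 0) (x 0) := ppos _ _
    have := hbound0 n; have := hbound0 m
    linarith
  -- tail sups
  set S : ℕ → Set ℝ := fun k =>
    (fun nm : ℕ × ℕ => p (x nm.1) (x nm.2)) '' {nm | k ≤ nm.1 ∧ k ≤ nm.2} with hSdef
  have hSne : ∀ k, (S k).Nonempty := fun k => ⟨p (x k) (x k), ⟨(k, k), ⟨le_rfl, le_rfl⟩, rfl⟩⟩
  have hSbdd : ∀ k, BddAbove (S k) := by
    intro k
    refine ⟨2 * B, ?_⟩
    rintro r ⟨⟨n, m⟩, _, rfl⟩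
    exact hbound n m
  set D : ℕ → ℝ := fun k => sSup (S k) with hDdef
  have hmemD : ∀ k n m, k ≤ n → k ≤ m → p (x n) (x m) ≤ D k := by
    intro k n m hn hm
    exact le_csSup (hSbdd k) ⟨(n, m), ⟨hn, hm⟩, rfl⟩
  have hD0 : ∀ k, 0 ≤ D k := fun k => (ppos (x k) (x k)).trans (hmemD k k k le_rfl le_rfl)
  have hDanti : Antitone D := by
    intro k l hkl
    apply csSup_le_csSup (hSbdd k) (hSne l)
    rintro r ⟨⟨n, m⟩, ⟨hn, hm⟩, rfl⟩
    exact ⟨(n, m), ⟨hkl.trans hn, hkl.trans hm⟩, rfl⟩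
  have hDbdd : BddBelow (Set.range D) := ⟨0, by rintro r ⟨k, rfl⟩; exact hD0 k⟩
  have hDlim : Tendsto D atTop (𝓝 (⨅ k, D k)) := tendsto_atTop_ciInf hDanti hDbdd
  set L : ℝ := ⨅ k, D k with hLdef
  have hL0 : 0 ≤ L := le_ciInf hD0
  have hLzero : L = 0 := by
    by_contra hne
    have hL : 0 < L := lt_of_le_of_ne hL0 (Ne.symm hne)
    set c : ℝ := ψ (L / 2) with hcdef
    have hc : 0 < c := hψpos _ (by linarith)
    have key : ∀ k, D (k + 1) ≤ max (L / 2) (D k - c) := by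
      intro k
      apply csSup_le (hSne (k + 1))
      rintro r ⟨⟨n, m⟩, ⟨hn, hm⟩, rfl⟩
      obtain ⟨n', rfl⟩ : ∃ n', n = n' + 1 := ⟨n - 1, by omega⟩
      obtain ⟨m', rfl⟩ : ∃ m', m = m' + 1 := ⟨m - 1, by omega⟩
      have hn' : k ≤ n' := by omega
      have hm' : k ≤ m' := by omega
      set t : ℝ := p (x n') (x m') with htdef
      have ht0 : 0 ≤ t := ppos _ _
      have htD : t ≤ D k := hmemD k n' m' hn' hm'
      have hr : p (x (n' + 1)) (x (m' + 1)) ≤ t - ψ t := hstep n' m'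
      rcases le_total t (L / 2) with hcase | hcase
      · have : p (x (n' + 1)) (x (m' + 1)) ≤ L / 2 := by
          have := hψnn t ht0; linarith
        exact this.trans (le_max_left _ _)
      · have hψt : c ≤ ψ t := hψm (by simp; linarith) ht0 hcase
        have : p (x (n' + 1)) (x (m' + 1)) ≤ D k - c := by linarith
        exact this.trans (le_max_right _ _)
    have hlim1 : Tendsto (fun k => D (k + 1)) atTop (𝓝 L) :=
      hDlim.comp (tendsto_add_atTop_nat 1)
    have hlim2 : Tendsto (fun k => max (L / 2) (D k - c)) atTop (𝓝 (max (L / 2) (L - c))) :=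
      tendsto_const_nhds.max (hDlim.sub_const c)
    have hle : L ≤ max (L / 2) (L - c) := le_of_tendsto_of_tendsto' hlim1 hlim2 key
    have hlt : max (L / 2) (L - c) < L := max_lt (by linarith) (by linarith)
    linarith
  have hDto0 : Tendsto D atTop (𝓝 0) := hLzero ▸ hDlim
  have hminT : Tendsto (fun nm : ℕ × ℕ => min nm.1 nm.2) atTop atTop := by
    apply tendsto_atTop_atTop.2
    intro b
    exact ⟨(b, b), fun a ha => le_min ha.1 ha.2⟩
  have hCauchy : Tendsto (fun nm : ℕ × ℕ => p (x nm.1) (x nm.2)) atTop (𝓝 0) := by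
    apply squeeze_zero (fun nm => ppos _ _) (g := fun nm : ℕ × ℕ => D (min nm.1 nm.2))
    · intro nm
      exact hmemD _ _ _ (min_le_left _ _) (min_le_right _ _)
    · exact hDto0.comp hminT
  obtain ⟨u, hu0, hconv⟩ := hcomp x 0 hCauchy
  have hconv' : PConvergesTo p x u := by
    unfold PConvergesTo; rw [hu0]; exact hconv
  have hxle : ∀ n, x n ≤ u := hord x u hmonoX hconv'
  have hbnd : ∀ n, p (f u) u ≤ p (x n) u + p (x (n + 1)) u := by
    intro n
    have h1 : p (f u) u ≤ p (f u) (x (n + 1)) + p (x (n + 1)) u - p (x (n + 1)) (x (n + 1)) :=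
      ptri _ _ _
    have h2 : p (f u) (x (n + 1)) ≤ p u (x n) - ψ (p u (x n)) := by
      rw [hxsucc n]; exact hcontr u (x n) (hxle n)
    have h3 : p u (x n) = p (x n) u := psymm _ _
    have h4 : 0 ≤ ψ (p u (x n)) := hψnn _ (ppos _ _)
    have h5 : 0 ≤ p (x (n + 1)) (x (n + 1)) := ppos _ _
    linarith
  have hto0 : Tendsto (fun n => p (x n) u + p (x (n + 1)) u) atTop (𝓝 0) := by
    have h1 : Tendsto (fun n => p (x (n + 1)) u) atTop (𝓝 0) :=
      hconv.comp (tendsto_add_atTop_nat 1)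
    simpa using hconv.add h1
  have hfu : p (f u) u ≤ 0 := ge_of_tendsto' hto0 hbnd
  have hfu0 : p (f u) u = 0 := le_antisymm hfu (ppos _ _)
  have hfufu : p (f u) (f u) = 0 :=
    le_antisymm (by rw [← hfu0]; exact pself _ _) (ppos _ _)
  exact ⟨u, (p2 (f u) u).mpr ⟨by rw [hfufu, hfu0], by rw [hfu0, hu0]⟩, hu0⟩
end
end

section
/- Under the hypotheses of the weakly contractive fixed point theorem in ordered partial metric spaces, the Picard iterates x_n = f^n(x_0) starting from x_0 with x_0 ≤ f(x_0) satisfy lim_{n→∞} p(x_{n+1},x_n) = 0. -/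
noncomputable section
open Filter Topology

theorem picard_consecutive_distance_tendsto_zero {X : Type*} [PartialOrder X]
    (p : X → X → ℝ) (hp : IsPartialMetric p)
    (f : X → X) (hf : Monotone f)
    (ψ : ℝ → ℝ) (hψc : ContinuousOn ψ (Set.Ici 0)) (hψm : MonotoneOn ψ (Set.Ici 0))
    (hψpos : ∀ t : ℝ, 0 < t → 0 < ψ t) (hψ0 : ψ 0 = 0)
    (hcontr : ∀ x y : X, y ≤ x → p (f x) (f y) ≤ p x y - ψ (p x y))
    (x₀ : X) (hx₀ : x₀ ≤ f x₀) :
    Tendsto (fun n => p (f^[n + 1] x₀) (f^[n] x₀)) atTop (𝓝 0) := by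
  obtain ⟨hnng, _, _, _, _⟩ := hp
  set a : ℕ → ℝ := fun n => p (f^[n + 1] x₀) (f^[n] x₀) with ha
  have hchain : ∀ n, f^[n] x₀ ≤ f^[n + 1] x₀ := by
    intro n
    induction n with
    | zero => simpa using hx₀
    | succ k ih =>
      rw [Function.iterate_succ_apply', Function.iterate_succ_apply']
      exact hf ih
  have hψnn : ∀ t : ℝ, 0 ≤ t → 0 ≤ ψ t := by
    intro t ht
    rcases eq_or_lt_of_le ht with h | h
    · rw [← h, hψ0]
    · exact (hψpos t h).le
  have hstep : ∀ n, a (n + 1) ≤ a n - ψ (a n) := by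
    intro n
    have := hcontr (f^[n + 1] x₀) (f^[n] x₀) (hchain n)
    simpa [ha, Function.iterate_succ_apply'] using this
  have hanti : Antitone a := by
    apply antitone_nat_of_succ_le
    intro n
    calc a (n + 1) ≤ a n - ψ (a n) := hstep n
      _ ≤ a n := by linarith [hψnn (a n) (hnng _ _)]
  have hbdd : BddBelow (Set.range a) := ⟨0, by rintro _ ⟨n, rfl⟩; exact hnng _ _⟩
  have hL : Tendsto a atTop (𝓝 (⨅ n, a n)) := tendsto_atTop_ciInf hanti hbdd
  set L : ℝ := ⨅ n, a n with hLdef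
  have hL0 : 0 ≤ L := le_ciInf fun n => hnng _ _
  have hψL : Tendsto (fun n => ψ (a n)) atTop (𝓝 (ψ L)) := by
    apply (hψc L hL0).tendsto.comp
    rw [tendsto_nhdsWithin_iff]
    exact ⟨hL, Filter.Eventually.of_forall fun n => hnng _ _⟩
  have hL' : Tendsto (fun n => a (n + 1)) atTop (𝓝 L) :=
    hL.comp (tendsto_add_atTop_nat 1)
  have hineq : L ≤ L - ψ L :=
    le_of_tendsto_of_tendsto' hL' (hL.sub hψL) hstep
  have hψLle : ψ L ≤ 0 := by linarith
  have hLeq : L = 0 := by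
    by_contra h
    have : 0 < L := lt_of_le_of_ne hL0 (Ne.symm h)
    linarith [hψpos L this]
  rw [← hLeq]
  exact hL
end
end

section
/- Under the hypotheses of the weakly contractive fixed point theorem in ordered partial metric spaces, the Picard iterates x_n = f^n(x_0) with x_0 ≤ f(x_0) form a Cauchy sequence in (X,p), i.e., lim_{n,m→∞} p(x_n,x_m) = 0. -/
noncomputable section
open Filter Topology

theorem picard_is_cauchy {X : Type*} [PartialOrder X]
    (p : X → X → ℝ) (hp : IsPartialMetric p)
    (f : X → X) (hf : Monotone f)
    (ψ : ℝ → ℝ) (hψc : ContinuousOn ψ (Set.Ici 0)) (hψm : MonotoneOn ψ (Set.Ici 0))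
    (hψpos : ∀ t : ℝ, 0 < t → 0 < ψ t) (hψ0 : ψ 0 = 0)
    (hψtop : Tendsto ψ atTop atTop)
    (hcontr : ∀ x y : X, y ≤ x → p (f x) (f y) ≤ p x y - ψ (p x y))
    (x₀ : X) (hx₀ : x₀ ≤ f x₀) :
    Tendsto (fun nm : ℕ × ℕ => p (f^[nm.1] x₀) (f^[nm.2] x₀)) atTop (𝓝 0) := by
  obtain ⟨hp0, hpeq, hpsmall, hpsym, hptri⟩ := hp
  set x : ℕ → X := fun n => f^[n] x₀ with hx
  have hstep : ∀ n, x (n + 1) = f (x n) := fun n => Function.iterate_succ_apply' f n x₀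
  have hmono : Monotone x := by
    apply monotone_nat_of_le_succ
    intro n
    induction n with
    | zero => simpa [x] using hx₀
    | succ k ih => rw [hstep, hstep]; exact hf ih
  have hψnn : ∀ t, 0 ≤ t → 0 ≤ ψ t := fun t ht => by
    have := hψm (Set.mem_Ici.2 (le_refl (0:ℝ))) (Set.mem_Ici.2 ht) ht
    rwa [hψ0] at this
  set a : ℕ → ℝ := fun n => p (x (n + 1)) (x n) with ha
  have hadec : ∀ n, a (n + 1) ≤ a n - ψ (a n) := by
    intro n
    have h := hcontr (x (n + 1)) (x n) (hmono (Nat.le_succ n))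
    rw [← hstep, ← hstep] at h
    exact h
  have hamono : Antitone a := by
    apply antitone_nat_of_succ_le
    intro n
    have := hadec n
    have h2 := hψnn (a n) (hp0 _ _)
    linarith
  have ha0 : ∀ n, 0 ≤ a n := fun n => hp0 _ _
  have haBdd : BddBelow (Set.range a) := ⟨0, fun y ⟨n, hn⟩ => hn ▸ ha0 n⟩
  have halim : Tendsto a atTop (𝓝 (⨅ n, a n)) := tendsto_atTop_ciInf hamono haBdd
  have hinf0 : (⨅ n, a n) = 0 := by
    have hinfnn : 0 ≤ ⨅ n, a n := le_ciInf ha0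
    rcases lt_or_eq_of_le hinfnn with hpos | heq
    · exfalso
      have hge : ∀ n, (⨅ n, a n) ≤ a n := fun n => ciInf_le haBdd n
      have hψbound : ∀ n, ψ (⨅ n, a n) ≤ a n - a (n + 1) := by
        intro n
        have h1 := hψm (Set.mem_Ici.2 (le_of_lt hpos)) (Set.mem_Ici.2 (ha0 n)) (hge n)
        have h2 := hadec n
        linarith
      have hdiff : Tendsto (fun n => a n - a (n + 1)) atTop (𝓝 0) := by
        have : Tendsto (fun n => a (n + 1)) atTop (𝓝 (⨅ n, a n)) :=
          halim.comp (tendsto_add_atTop_nat 1)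
        simpa using halim.sub this
      have : ψ (⨅ n, a n) ≤ 0 :=
        ge_of_tendsto hdiff (Eventually.of_forall hψbound)
      exact absurd this (not_le.2 (hψpos _ hpos))
    · exact heq.symm
  rw [hinf0] at halim
  -- key claim
  have key : ∀ ε : ℝ, 0 < ε → ∃ N : ℕ, ∀ n m, N ≤ n → N ≤ m → p (x n) (x m) ≤ 2 * ε := by
    intro ε hε
    set δ : ℝ := min (ε / 2) (ψ (ε / 2)) with hδ
    have hδpos : 0 < δ := lt_min (by linarith) (hψpos _ (by linarith))
    obtain ⟨N, hN⟩ := (halim.eventually (gt_mem_nhds hδpos)).exists_forall_of_atTop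
    have haN : a N < δ := hN N le_rfl
    have main : ∀ k, p (x N) (x (N + k)) ≤ ε := by
      intro k
      induction k with
      | zero =>
        have h1 : p (x N) (x N) ≤ p (x N) (x (N + 1)) := hpsmall _ _
        have h2 : p (x N) (x (N + 1)) = a N := hpsym _ _
        have : δ ≤ ε / 2 := min_le_left _ _
        simp only [Nat.add_zero]
        linarith
      | succ k ih =>
        have htr := hptri (x N) (x (N + (k + 1))) (x (N + 1))
        have hpp : 0 ≤ p (x (N + 1)) (x (N + 1)) := hp0 _ _
        have h2 : p (x N) (x (N + 1)) = a N := hpsym _ _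
        have hc : p (x (N + 1)) (x (N + (k + 1))) ≤
            p (x N) (x (N + k)) - ψ (p (x N) (x (N + k))) := by
          have hle : x N ≤ x (N + k) := hmono (Nat.le_add_right _ _)
          have h := hcontr (x (N + k)) (x N) hle
          rw [← hstep] at h
          have hx1 : f (x N) = x (N + 1) := (hstep N).symm
          have hx2 : f^[N + k + 1] x₀ = x (N + (k + 1)) := rfl
          rw [hx1] at h
          calc p (x (N + 1)) (x (N + (k + 1))) = p (x (N + (k+1))) (x (N+1)) := hpsym _ _
            _ ≤ p (x (N + k)) (x N) - ψ (p (x (N + k)) (x N)) := h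
            _ = p (x N) (x (N + k)) - ψ (p (x N) (x (N + k))) := by rw [hpsym (x (N+k)) (x N)]
        set P := p (x N) (x (N + k)) with hP
        rcases le_or_gt P (ε / 2) with hcase | hcase
        · have hψP : 0 ≤ ψ P := hψnn P (hp0 _ _)
          have : δ ≤ ε / 2 := min_le_left _ _
          linarith
        · have hψP : ψ (ε / 2) ≤ ψ P :=
            hψm (Set.mem_Ici.2 (by linarith)) (Set.mem_Ici.2 (hp0 _ _)) (le_of_lt hcase)
          have : δ ≤ ψ (ε / 2) := min_le_right _ _
          linarith
    refine ⟨N, fun n m hn hm => ?_⟩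
    have htr := hptri (x n) (x m) (x N)
    have h1 : p (x n) (x N) = p (x N) (x n) := hpsym _ _
    have h2 : 0 ≤ p (x N) (x N) := hp0 _ _
    obtain ⟨k1, hk1⟩ := Nat.exists_eq_add_of_le hn
    obtain ⟨k2, hk2⟩ := Nat.exists_eq_add_of_le hm
    have hb1 := main k1
    have hb2 := main k2
    rw [← hk1] at hb1
    rw [← hk2] at hb2
    linarith
  rw [Metric.tendsto_nhds]
  intro ε hε
  obtain ⟨N, hN⟩ := key (ε / 3) (by linarith)
  rw [eventually_atTop]
  refine ⟨(N, N), fun nm hnm => ?_⟩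
  have h1 := hN nm.1 nm.2 hnm.1 hnm.2
  have h2 : 0 ≤ p (x nm.1) (x nm.2) := hp0 _ _
  rw [Real.dist_eq, sub_zero, abs_of_nonneg h2]
  linarith
end
end

section
/- Let (X,≤) be a partially ordered set and p a partial metric on X making (X,p) complete. Let f : X → X be monotone non-decreasing such that there exists 0 ≤ c < 1 with p(fx,fy) ≤ c·p(x,y) whenever y ≤ x. Suppose there exists x_0 with x_0 ≤ f(x_0), and either f is continuous in (X,p), or every non-decreasing convergent sequence {x_n} with limit x satisfies x_n ≤ x for all n. Then f has a fixed point u with p(u,u) = 0. -/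
noncomputable section
open Filter Topology

theorem fixed_point_banach_type {X : Type*} [PartialOrder X] (p : X → X → ℝ)
    (hp : IsPartialMetric p) (hcomp : PComplete p)
    (f : X → X) (hf : Monotone f)
    (c : ℝ) (hc0 : 0 ≤ c) (hc1 : c < 1)
    (hcontr : ∀ x y : X, y ≤ x → p (f x) (f y) ≤ c * p x y)
    (x₀ : X) (hx₀ : x₀ ≤ f x₀)
    (hcont : PContinuousMap p f ∨
      ∀ (u : ℕ → X) (x : X), Monotone u → PConvergesTo p u x → ∀ n, u n ≤ x) :
    ∃ u : X, f u = u ∧ p u u = 0 := by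
  obtain ⟨hpos, heq, hsmall, hsym, htri⟩ := hp
  set u : ℕ → X := fun n => f^[n] x₀ with hu
  have hustep : ∀ n, u (n + 1) = f (u n) := by
    intro n; simp [hu, Function.iterate_succ_apply']
  have humono : Monotone u := by
    apply monotone_nat_of_le_succ
    intro n
    induction n with
    | zero => simpa [hu] using hx₀
    | succ k ih => rw [hustep, hustep]; exact hf ih
  set M : ℝ := p (u 1) (u 0) with hM
  have hMpos : 0 ≤ M := hpos _ _
  have hstep : ∀ n, p (u (n + 1)) (u n) ≤ c ^ n * M := by
    intro n
    induction n with
    | zero => simp [hM]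
    | succ k ih =>
      have h := hcontr (u (k+1)) (u k) (humono (Nat.le_succ k))
      rw [← hustep k, ← hustep (k+1)] at h
      have h2 := mul_le_mul_of_nonneg_left ih hc0
      calc p (u (k+1+1)) (u (k+1)) ≤ c * p (u (k+1)) (u k) := h
        _ ≤ c * (c ^ k * M) := h2
        _ = c ^ (k+1) * M := by ring
  set C : ℝ := M * (1 + (1 - c)⁻¹) with hC
  have hCpos : 0 ≤ C := by
    apply mul_nonneg hMpos
    have : 0 ≤ (1 - c)⁻¹ := le_of_lt (inv_pos.2 (by linarith))
    linarith
  have hsum : ∀ k, ∑ i ∈ Finset.range k, c ^ i ≤ (1 - c)⁻¹ := by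
    intro k
    have h1 := Summable.sum_le_tsum (Finset.range k) (fun i _ => pow_nonneg hc0 i)
      (summable_geometric_of_lt_one hc0 hc1)
    rwa [tsum_geometric_of_lt_one hc0 hc1] at h1
  have hbound : ∀ m k, p (u (m + k)) (u m) ≤
      c ^ m * M + (∑ i ∈ Finset.range k, c ^ (m + i)) * M := by
    intro m k
    induction k with
    | zero =>
      simp only [Nat.add_zero, Finset.range_zero, Finset.sum_empty, zero_mul, add_zero]
      calc p (u m) (u m) ≤ p (u m) (u (m+1)) := hsmall _ _
        _ = p (u (m+1)) (u m) := hsym _ _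
        _ ≤ c ^ m * M := hstep m
    | succ k ih =>
      have h1 : p (u (m + (k+1))) (u m) ≤
          p (u (m + (k+1))) (u (m+k)) + p (u (m+k)) (u m) - p (u (m+k)) (u (m+k)) :=
        htri _ _ _
      have h2 : p (u (m + (k+1))) (u (m+k)) ≤ c ^ (m + k) * M := hstep (m + k)
      have h3 : 0 ≤ p (u (m+k)) (u (m+k)) := hpos _ _
      rw [Finset.sum_range_succ, add_mul]
      linarith
  have hbound' : ∀ m k, p (u (m + k)) (u m) ≤ c ^ m * C := by
    intro m k
    have h1 : (∑ i ∈ Finset.range k, c ^ (m + i)) = c ^ m * ∑ i ∈ Finset.range k, c ^ i := by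
      rw [Finset.mul_sum]; exact Finset.sum_congr rfl (fun i _ => pow_add c m i)
    have h2 : (∑ i ∈ Finset.range k, c ^ (m + i)) * M ≤ c ^ m * (1 - c)⁻¹ * M := by
      rw [h1]
      have := mul_le_mul_of_nonneg_left (hsum k) (pow_nonneg hc0 m)
      exact mul_le_mul_of_nonneg_right this hMpos
    have := hbound m k
    calc p (u (m + k)) (u m) ≤ c ^ m * M + (∑ i ∈ Finset.range k, c ^ (m + i)) * M := this
      _ ≤ c ^ m * M + c ^ m * (1 - c)⁻¹ * M := by linarith
      _ = c ^ m * C := by rw [hC]; ring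
  have hbound'' : ∀ a b : ℕ, p (u a) (u b) ≤ c ^ (min a b) * C := by
    intro a b
    rcases le_total a b with h | h
    · have := hbound' a (b - a)
      rw [Nat.add_sub_cancel' h] at this
      rw [min_eq_left h, hsym]
      exact this
    · have := hbound' b (a - b)
      rw [Nat.add_sub_cancel' h] at this
      rw [min_eq_right h]
      exact this
  have hmin : Tendsto (fun nm : ℕ × ℕ => min nm.1 nm.2) atTop atTop := by
    rw [← Filter.prod_atTop_atTop_eq]
    apply Filter.tendsto_atTop.2
    intro b
    filter_upwards [(Filter.eventually_ge_atTop b).prod_mk (Filter.eventually_ge_atTop b)]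
    rintro ⟨n, m⟩ ⟨h1, h2⟩
    exact le_min h1 h2
  have hgeo : Tendsto (fun k : ℕ => c ^ k * C) atTop (𝓝 0) := by
    have := (tendsto_pow_atTop_nhds_zero_of_lt_one hc0 hc1).mul_const C
    simpa using this
  have hCauchy : Tendsto (fun nm : ℕ × ℕ => p (u nm.1) (u nm.2)) atTop (𝓝 0) := by
    exact squeeze_zero (fun nm => hpos _ _) (fun nm => hbound'' nm.1 nm.2) (hgeo.comp hmin)
  obtain ⟨x, hxx, hxconv⟩ := hcomp u 0 hCauchy
  have hconv : PConvergesTo p u x := by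
    unfold PConvergesTo; rw [hxx]; exact hxconv
  have hfx : p (f x) (f x) = 0 := by
    have h1 := hcontr x x le_rfl
    rw [hxx] at h1
    exact le_antisymm (by linarith) (hpos _ _)
  have hkey : Tendsto (fun n => p (u (n + 1)) (f x)) atTop (𝓝 0) := by
    rcases hcont with hc | hc
    · have := ((hc u x).1 hconv)
      unfold PConvergesTo at this
      rw [hfx] at this
      have heqfun : ∀ n, p (u (n + 1)) (f x) = p (f (u n)) (f x) := fun n => by rw [hustep]
      simpa [heqfun] using this
    · have hle : ∀ n, u n ≤ x := hc u x humono hconv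
      apply squeeze_zero (fun n => hpos _ _) (g := fun n => c * p (u n) x)
      · intro n
        rw [hustep, hsym]
        calc p (f x) (f (u n)) ≤ c * p x (u n) := hcontr _ _ (hle n)
          _ = c * p (u n) x := by rw [hsym]
      · have := hxconv.const_mul c
        simpa using this
  have hxfx : p x (f x) = 0 := by
    have hub : ∀ n, p x (f x) ≤ p x (u (n+1)) + p (u (n+1)) (f x) := by
      intro n
      have h1 := htri x (f x) (u (n+1))
      have h2 : 0 ≤ p (u (n+1)) (u (n+1)) := hpos _ _
      linarith
    have hlim : Tendsto (fun n => p x (u (n+1)) + p (u (n+1)) (f x)) atTop (𝓝 0) := by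
      have h1 : Tendsto (fun n => p x (u (n+1))) atTop (𝓝 0) := by
        have h2 := hxconv.comp (tendsto_add_atTop_nat 1)
        simpa [Function.comp_def, hsym] using h2
      simpa using h1.add hkey
    exact le_antisymm (ge_of_tendsto hlim (Filter.Eventually.of_forall hub)) (hpos _ _)
  have hfix : x = f x := (heq x (f x)).2 ⟨by rw [hxx, hxfx], by rw [hxfx, hfx]⟩
  exact ⟨x, hfix.symm, hxx⟩
end
end

section
/- Under the hypotheses of the weakly contractive fixed point theorem in ordered complete partial metric spaces, if additionally for any two points x, y ∈ X there exists z ∈ X comparable with both x and y, then the fixed point of f is unique. -/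
noncomputable section
open Filter Topology

private lemma psi_nonneg {ψ : ℝ → ℝ} (hψm : MonotoneOn ψ (Set.Ici 0)) (hψ0 : ψ 0 = 0)
    {t : ℝ} (ht : 0 ≤ t) : 0 ≤ ψ t := by
  have := hψm (Set.mem_Ici.2 le_rfl) (Set.mem_Ici.2 ht) ht
  simpa [hψ0] using this

private lemma weak_seq_tendsto_zero {ψ : ℝ → ℝ} (hψm : MonotoneOn ψ (Set.Ici 0))
    (hψpos : ∀ t : ℝ, 0 < t → 0 < ψ t) (hψ0 : ψ 0 = 0)
    (a : ℕ → ℝ) (ha0 : ∀ n, 0 ≤ a n) (hstep : ∀ n, a (n + 1) ≤ a n - ψ (a n)) :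
    Tendsto a atTop (𝓝 0) := by
  have hanti : Antitone a := antitone_nat_of_succ_le (fun n => by
    have h1 := hstep n
    have h2 := psi_nonneg hψm hψ0 (ha0 n)
    linarith)
  rw [Metric.tendsto_atTop]
  intro ε hε
  obtain ⟨N, hN⟩ : ∃ N, a N < ε := by
    by_contra h
    push_neg at h
    have hεa : ∀ n, ε ≤ a n := h
    have hbound : ∀ n : ℕ, a n ≤ a 0 - n * ψ ε := by
      intro n
      induction n with
      | zero => simp
      | succ n ih =>
        have h1 := hstep n
        have h2 : ψ ε ≤ ψ (a n) := hψm (Set.mem_Ici.2 hε.le) (Set.mem_Ici.2 (ha0 n)) (hεa n)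
        push_cast
        push_cast at ih
        linarith
    obtain ⟨n, hn⟩ := exists_nat_gt (a 0 / ψ ε)
    have hψε : 0 < ψ ε := hψpos ε hε
    have hlt : a 0 / ψ ε * ψ ε < n * ψ ε := mul_lt_mul_of_pos_right hn hψε
    rw [div_mul_cancel₀ _ hψε.ne'] at hlt
    have := hbound n
    linarith [ha0 n]
  refine ⟨N, fun n hn => ?_⟩
  rw [Real.dist_eq, sub_zero, abs_of_nonneg (ha0 n)]
  exact lt_of_le_of_lt (hanti hn) hN

private lemma iter_tendsto_zero {X : Type*} [PartialOrder X] {p : X → X → ℝ}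
    (hp0 : ∀ x y, 0 ≤ p x y) {f : X → X} (hf : Monotone f)
    {ψ : ℝ → ℝ} (hψm : MonotoneOn ψ (Set.Ici 0))
    (hψpos : ∀ t : ℝ, 0 < t → 0 < ψ t) (hψ0 : ψ 0 = 0)
    (hcontr : ∀ x y : X, y ≤ x → p (f x) (f y) ≤ p x y - ψ (p x y))
    {x y : X} (hyx : y ≤ x) :
    Tendsto (fun n => p (f^[n] x) (f^[n] y)) atTop (𝓝 0) := by
  refine weak_seq_tendsto_zero hψm hψpos hψ0 _ (fun n => hp0 _ _) (fun n => ?_)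
  rw [Function.iterate_succ_apply', Function.iterate_succ_apply']
  exact hcontr _ _ (hf.iterate n hyx)

theorem fixed_point_unique {X : Type*} [PartialOrder X] (p : X → X → ℝ)
    (hp : IsPartialMetric p) (hcomp : PComplete p)
    (f : X → X) (hf : Monotone f)
    (ψ : ℝ → ℝ) (hψc : ContinuousOn ψ (Set.Ici 0)) (hψm : MonotoneOn ψ (Set.Ici 0))
    (hψpos : ∀ t : ℝ, 0 < t → 0 < ψ t) (hψ0 : ψ 0 = 0)
    (hψtop : Tendsto ψ atTop atTop)
    (hcontr : ∀ x y : X, y ≤ x → p (f x) (f y) ≤ p x y - ψ (p x y))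
    (x₀ : X) (hx₀ : x₀ ≤ f x₀)
    (hcont : PContinuousMap p f ∨
      ∀ (u : ℕ → X) (x : X), Monotone u → PConvergesTo p u x → ∀ n, u n ≤ x)
    (hdir : ∀ x y : X, ∃ z : X, (z ≤ x ∨ x ≤ z) ∧ (z ≤ y ∨ y ≤ z)) :
    ∃! u : X, f u = u := by

  obtain ⟨hp0, hpeq, hpss, hpsym, hptri⟩ := hp
  -- the Picard sequence
  set x : ℕ → X := fun n => f^[n] x₀ with hxdef
  have hmono : Monotone x := by
    apply monotone_nat_of_le_succ
    intro n
    exact hf.iterate n hx₀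
  -- successive distances tend to 0
  have hd : Tendsto (fun n => p (x (n + 1)) (x n)) atTop (𝓝 0) := by
    exact iter_tendsto_zero hp0 hf hψm hψpos hψ0 hcontr hx₀
  have hx1 : ∀ k, x (k + 1) = f (x k) := fun k => Function.iterate_succ_apply' f k x₀
  have hdnn : ∀ n, 0 ≤ p (x (n + 1)) (x n) := fun n => hp0 _ _
  -- key Cauchy estimate
  have key : ∀ ε : ℝ, 0 < ε → ∃ N, ∀ n m, N ≤ n → n ≤ m → p (x n) (x m) ≤ ε := by
    intro ε hε
    set δ : ℝ := min (ε / 2) (ψ (ε / 2)) with hδdef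
    have hδpos : 0 < δ := lt_min (by linarith) (hψpos _ (by linarith))
    obtain ⟨N, hN⟩ := (Metric.tendsto_atTop.1 hd) δ hδpos
    have hNd : ∀ n, N ≤ n → p (x (n + 1)) (x n) < δ := by
      intro n hn
      have := hN n hn
      rwa [Real.dist_eq, sub_zero, abs_of_nonneg (hdnn n)] at this
    refine ⟨N, fun n m hn hnm => ?_⟩
    induction m, hnm using Nat.le_induction with
    | base =>
      have h1 : p (x n) (x n) ≤ p (x n) (x (n + 1)) := hpss _ _
      have h2 : p (x n) (x (n + 1)) = p (x (n + 1)) (x n) := hpsym _ _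
      have h3 := hNd n hn
      have : δ ≤ ε / 2 := min_le_left _ _
      linarith
    | succ m hm ih =>
      have tri := hptri (x n) (x (m + 1)) (x (n + 1))
      have h1 : p (x n) (x (n + 1)) < δ := by
        rw [hpsym]; exact hNd n hn
      have hcon : p (x (m + 1)) (x (n + 1)) ≤ p (x m) (x n) - ψ (p (x m) (x n)) := by
        rw [hx1 m, hx1 n]
        exact hcontr (x m) (x n) (hmono hm)
      have h2 : p (x (n + 1)) (x (m + 1)) = p (x (m + 1)) (x (n + 1)) := hpsym _ _
      have hsym2 : p (x m) (x n) = p (x n) (x m) := hpsym _ _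
      set t : ℝ := p (x n) (x m) with htdef
      have ht0 : 0 ≤ t := hp0 _ _
      have hss : 0 ≤ p (x (n + 1)) (x (n + 1)) := hp0 _ _
      rcases le_or_gt t (ε / 2) with hc | hc
      · have hψnn : 0 ≤ ψ t := psi_nonneg hψm hψ0 ht0
        have hδle : δ ≤ ε / 2 := min_le_left _ _
        rw [hsym2] at hcon
        linarith
      · have hψle : ψ (ε / 2) ≤ ψ t :=
          hψm (Set.mem_Ici.2 (by linarith)) (Set.mem_Ici.2 ht0) hc.le
        have hδle : δ ≤ ψ (ε / 2) := min_le_right _ _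
        rw [hsym2] at hcon
        linarith
  -- Cauchyness
  have hC : Tendsto (fun nm : ℕ × ℕ => p (x nm.1) (x nm.2)) atTop (𝓝 0) := by
    rw [Metric.tendsto_atTop]
    intro ε hε
    obtain ⟨N, hN⟩ := key (ε / 2) (by linarith)
    refine ⟨(N, N), fun nm hnm => ?_⟩
    obtain ⟨h1, h2⟩ := hnm
    have hb : p (x nm.1) (x nm.2) ≤ ε / 2 := by
      rcases le_total nm.1 nm.2 with h | h
      · exact hN nm.1 nm.2 h1 h
      · rw [hpsym]; exact hN nm.2 nm.1 h2 h
    rw [Real.dist_eq, sub_zero, abs_of_nonneg (hp0 _ _)]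
    linarith
  obtain ⟨u, huu, hulim⟩ := hcomp x 0 hC
  -- self distance of f u is zero
  have hfuu : p (f u) (f u) = 0 := by
    have h1 := hcontr u u le_rfl
    rw [huu, hψ0] at h1
    have h2 := hp0 (f u) (f u)
    linarith
  have hconv : PConvergesTo p x u := by
    unfold PConvergesTo
    rw [huu]
    exact hulim
  have hulim' : Tendsto (fun n => p (x (n + 1)) u) atTop (𝓝 0) :=
    hulim.comp (tendsto_add_atTop_nat 1)
  -- p u (f u) ≤ 0
  have hufu : p u (f u) ≤ 0 := by
    rcases hcont with hc | hord
    · have h := ((hc x u).1 hconv)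
      unfold PConvergesTo at h
      rw [hfuu] at h
      have heq : (fun n => p (f (x n)) (f u)) = fun n => p (x (n + 1)) (f u) := by
        funext n
        rw [hx1 n]
      rw [heq] at h
      have hlim : Tendsto (fun n => p (x (n + 1)) u + p (x (n + 1)) (f u)) atTop (𝓝 0) := by
        simpa using hulim'.add h
      refine ge_of_tendsto' hlim (fun n => ?_)
      have tri := hptri u (f u) (x (n + 1))
      have hs : p u (x (n + 1)) = p (x (n + 1)) u := hpsym _ _
      have hss : 0 ≤ p (x (n + 1)) (x (n + 1)) := hp0 _ _
      linarith
    · have hle : ∀ n, x n ≤ u := hord x u hmono hconv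
      have hb : ∀ n, p (x (n + 1)) (f u) ≤ p u (x n) := by
        intro n
        have h1 := hcontr u (x n) (hle n)
        have h2 : ψ (p u (x n)) ≥ 0 := psi_nonneg hψm hψ0 (hp0 _ _)
        have h3 : p (f u) (f (x n)) = p (x (n + 1)) (f u) := by
          rw [hpsym, hx1 n]
        linarith [h1, h3.symm.le]
      have hux : Tendsto (fun n => p u (x n)) atTop (𝓝 0) := by
        have : (fun n => p u (x n)) = fun n => p (x n) u := by
          funext n; exact hpsym _ _
        rw [this]; exact hulim
      have hlim : Tendsto (fun n => p (x (n + 1)) u + p u (x n)) atTop (𝓝 0) := by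
        simpa using hulim'.add hux
      refine ge_of_tendsto' hlim (fun n => ?_)
      have tri := hptri u (f u) (x (n + 1))
      have hs : p u (x (n + 1)) = p (x (n + 1)) u := hpsym _ _
      have hss : 0 ≤ p (x (n + 1)) (x (n + 1)) := hp0 _ _
      have := hb n
      linarith
  have hufu0 : p u (f u) = 0 := le_antisymm hufu (hp0 _ _)
  have hfix : f u = u := by
    symm
    exact (hpeq u (f u)).2 ⟨by rw [huu, hufu0], by rw [hufu0, hfuu]⟩
  refine ⟨u, hfix, fun v hv => ?_⟩
  -- uniqueness
  obtain ⟨z, hzv, hzu⟩ := hdir v u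
  have hfixiter : ∀ (w : X), f w = w → ∀ n, f^[n] w = w := by
    intro w hw n
    exact Function.iterate_fixed hw n
  have hcompz : ∀ (w : X), f w = w → (z ≤ w ∨ w ≤ z) →
      Tendsto (fun n => p (f^[n] z) w) atTop (𝓝 0) := by
    intro w hw hcz
    rcases hcz with h | h
    · have := iter_tendsto_zero hp0 hf hψm hψpos hψ0 hcontr h
      have heq : (fun n => p (f^[n] w) (f^[n] z)) = fun n => p (f^[n] z) w := by
        funext n; rw [hfixiter w hw n, hpsym]
      rwa [heq] at this
    · have := iter_tendsto_zero hp0 hf hψm hψpos hψ0 hcontr h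
      have heq : (fun n => p (f^[n] z) (f^[n] w)) = fun n => p (f^[n] z) w := by
        funext n; rw [hfixiter w hw n]
      rwa [heq] at this
  have hzv' := hcompz v hv hzv
  have hzu' := hcompz u hfix hzu
  have hvu : p v u ≤ 0 := by
    have hlim : Tendsto (fun n => p (f^[n] z) v + p (f^[n] z) u) atTop (𝓝 0) := by
      simpa using hzv'.add hzu'
    refine ge_of_tendsto' hlim (fun n => ?_)
    have tri := hptri v u (f^[n] z)
    have hs : p v (f^[n] z) = p (f^[n] z) v := hpsym _ _
    have hss : 0 ≤ p (f^[n] z) (f^[n] z) := hp0 _ _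
    linarith
  have hvu0 : p v u = 0 := le_antisymm hvu (hp0 _ _)
  have hvv : p v v = 0 := le_antisymm (by rw [← hvu0]; exact hpss _ _) (hp0 _ _)
  exact (hpeq v u).2 ⟨by rw [hvv, hvu0], by rw [hvu0, huu]⟩
end
end

section
/- If u is a fixed point of f, w is comparable with u, and f is monotone non-decreasing and satisfies p(fx,fy) ≤ p(x,y) - ψ(p(x,y)) for comparable x,y with ψ continuous, non-decreasing, positive on (0,∞), ψ(0)=0, then lim_{n→∞} p(u, f^n w) = 0. -/
noncomputable section
open Filter Topology

theorem iterates_approach_fixed_point {X : Type*} [PartialOrder X]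
    (p : X → X → ℝ) (hp : IsPartialMetric p)
    (f : X → X) (hf : Monotone f)
    (ψ : ℝ → ℝ) (hψc : ContinuousOn ψ (Set.Ici 0)) (hψm : MonotoneOn ψ (Set.Ici 0))
    (hψpos : ∀ t : ℝ, 0 < t → 0 < ψ t) (hψ0 : ψ 0 = 0)
    (hcontr : ∀ x y : X, (y ≤ x ∨ x ≤ y) → p (f x) (f y) ≤ p x y - ψ (p x y))
    (u : X) (hu : f u = u) (w : X) (huw : u ≤ w ∨ w ≤ u) :
    Tendsto (fun n => p u (f^[n] w)) atTop (𝓝 0) := by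

  obtain ⟨hnn, _, _, _, _⟩ := hp
  set a : ℕ → ℝ := fun n => p u (f^[n] w) with ha
  have hcomp : ∀ n, u ≤ f^[n] w ∨ f^[n] w ≤ u := by
    intro n
    induction n with
    | zero => simpa using huw
    | succ n ih =>
      rcases ih with h | h
      · left; rw [Function.iterate_succ_apply']
        calc u = f u := hu.symm
        _ ≤ f (f^[n] w) := hf h
      · right; rw [Function.iterate_succ_apply']
        calc f (f^[n] w) ≤ f u := hf h
        _ = u := hu
  have key : ∀ n, a (n + 1) ≤ a n - ψ (a n) := by
    intro n
    have := hcontr u (f^[n] w) ((hcomp n).symm)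
    simpa [ha, hu, Function.iterate_succ_apply'] using this
  have hanonneg : ∀ n, 0 ≤ a n := fun n => hnn _ _
  have hψa : ∀ n, 0 ≤ ψ (a n) := by
    intro n
    rw [← hψ0]
    exact hψm (by simp) (hanonneg n) (hanonneg n)
  have hanti : Antitone a := antitone_nat_of_succ_le fun n =>
    le_trans (key n) (by linarith [hψa n])
  have hbdd : BddBelow (Set.range a) := ⟨0, by rintro x ⟨n, rfl⟩; exact hanonneg n⟩
  obtain ⟨L, hL⟩ : ∃ L, Tendsto a atTop (𝓝 L) :=
    ⟨_, tendsto_atTop_ciInf hanti hbdd⟩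
  have hL0 : 0 ≤ L := le_of_tendsto_of_tendsto tendsto_const_nhds hL
    (Filter.Eventually.of_forall hanonneg)
  -- ψ (a n) → 0 by squeeze
  have hψ0lim : Tendsto (fun n => ψ (a n)) atTop (𝓝 0) := by
    have h1 : Tendsto (fun n => a n - a (n + 1)) atTop (𝓝 0) := by
      have := hL.sub (hL.comp (tendsto_add_atTop_nat 1))
      simpa using this
    refine squeeze_zero hψa (fun n => by linarith [key n]) h1
  -- ψ (a n) → ψ L by continuity
  have hψLlim : Tendsto (fun n => ψ (a n)) atTop (𝓝 (ψ L)) := by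
    have := (hψc L hL0).tendsto
    exact this.comp (tendsto_nhdsWithin_of_tendsto_nhds_of_eventually_within _ hL
      (Filter.Eventually.of_forall hanonneg))
  have hψL : ψ L = 0 := tendsto_nhds_unique hψLlim hψ0lim
  have : L = 0 := by
    by_contra h
    exact absurd hψL (ne_of_gt (hψpos L (lt_of_le_of_ne hL0 (Ne.symm h))))
  rw [← this]
  exact hL
end
end
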